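/- Let X ⊆ ℝ^n be a convex compact set with nonempty interior such that at every boundary point x there is a unique unit outward normal n(x) (i.e., y·n(x) ≤ x·n(x) for all y ∈ X) and the normal map is (1/R)-Lipschitz: ‖n(x) − n(y)‖ ≤ ‖x − y‖/R for all x, y ∈ ∂X. If Z ⊆ ∂X satisfies ∂X ⊆ Z + B(0, δ), then d_H(X, hull(Z)) ≤ δ²/R. -/

import Mathlib

open Metric Pointwise
open scoped RealInnerProductSpace

/-- Dümbgen–Walther bound: if `X ⊆ ℝ^n` is convex compact with nonempty interior and a
unique `(1/R)`-Lipschitz unit outward normal map on `∂X`, and `Z ⊆ ∂X` is a `δ`-cover of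
`∂X`, then `d_H(X, hull Z) ≤ δ²/R`. -/
theorem stmt11 (n : ℕ) (R δ : ℝ) (hR : 0 < R) (hδ : 0 < δ)
    (X : Set (EuclideanSpace ℝ (Fin n))) (hXc : IsCompact X) (hXconv : Convex ℝ X)
    (hXint : (interior X).Nonempty)
    (nmap : EuclideanSpace ℝ (Fin n) → EuclideanSpace ℝ (Fin n))
    (hnorm : ∀ x ∈ frontier X, ‖nmap x‖ = 1 ∧ ∀ y ∈ X, ⟪y, nmap x⟫ ≤ ⟪x, nmap x⟫)
    (huniq : ∀ x ∈ frontier X, ∀ u : EuclideanSpace ℝ (Fin n), ‖u‖ = 1 →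
      (∀ y ∈ X, ⟪y, u⟫ ≤ ⟪x, u⟫) → u = nmap x)
    (hlip : ∀ x ∈ frontier X, ∀ y ∈ frontier X, ‖nmap x - nmap y‖ ≤ ‖x - y‖ / R)
    (Z : Set (EuclideanSpace ℝ (Fin n))) (hZX : Z ⊆ frontier X)
    (hcov : frontier X ⊆ Z + closedBall (0 : EuclideanSpace ℝ (Fin n)) δ) :
    hausdorffDist X (convexHull ℝ Z) ≤ δ ^ 2 / R := by
  have ht0 : (0:ℝ) ≤ δ ^ 2 / R := by positivity
  rcases Z.eq_empty_or_nonempty with rfl | hZne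
  · simp [hausdorffDist_empty, ht0]
  have hXcl : IsClosed X := hXc.isClosed
  have hXne : X.Nonempty := hXint.mono interior_subset
  have hKX : convexHull ℝ Z ⊆ X := convexHull_min (hZX.trans hXcl.frontier_subset) hXconv
  have hKne : (convexHull ℝ Z).Nonempty := hZne.mono (subset_convexHull ℝ Z)
  -- support function bound
  have key : ∀ u : EuclideanSpace ℝ (Fin n), ‖u‖ = 1 →
      ∃ z ∈ Z, ∀ y ∈ X, ⟪y, u⟫ ≤ ⟪z, u⟫ + δ ^ 2 / R := by
    intro u hu
    obtain ⟨x, hxX, hmax⟩ := hXc.exists_isMaxOn hXne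
      ((continuous_id.inner continuous_const).continuousOn :
        ContinuousOn (fun y : EuclideanSpace ℝ (Fin n) => ⟪y, u⟫) X)
    have hmax' : ∀ y ∈ X, ⟪y, u⟫ ≤ ⟪x, u⟫ := fun y hy => hmax hy
    have hxf : x ∈ frontier X := by
      refine ⟨subset_closure hxX, ?_⟩
      intro hxint
      obtain ⟨ε, hε, hball⟩ := Metric.isOpen_iff.1 isOpen_interior x hxint
      have hmem : x + (ε/2) • u ∈ X := by
        refine interior_subset (hball ?_)
        have : dist (x + (ε/2) • u) x = ε/2 := by
          simp [dist_eq_norm, norm_smul, hu, abs_of_pos hε]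
        rw [mem_ball, this]; linarith
      have h2 := hmax' _ hmem
      rw [inner_add_left, real_inner_smul_left, real_inner_self_eq_norm_sq, hu] at h2
      nlinarith
    have hnu : u = nmap x := huniq x hxf u hu hmax'
    obtain ⟨z, hz, b, hb, hzb⟩ := hcov hxf
    have hxz : ‖x - z‖ ≤ δ := by
      have hzb' : z + b = x := hzb
      have : x - z = b := by rw [← hzb', add_sub_cancel_left]
      rw [this]
      simpa [dist_eq_norm] using (mem_closedBall.1 hb)
    refine ⟨z, hz, fun y hy => ?_⟩
    have h1 := hmax' y hy
    have hzf : z ∈ frontier X := hZX hz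
    have h2 : ⟪x, nmap z⟫ ≤ ⟪z, nmap z⟫ := (hnorm z hzf).2 x hxX
    have h3 := real_inner_le_norm (x - z) (nmap x - nmap z)
    have h4 := hlip x hxf z hzf
    have h5 : ⟪x - z, u⟫ = ⟪x - z, nmap x - nmap z⟫ + ⟪x - z, nmap z⟫ := by
      rw [hnu, inner_sub_right]; ring
    have h6 : ⟪x - z, nmap z⟫ ≤ 0 := by rw [inner_sub_left]; linarith
    have h7 : ⟪x - z, u⟫ ≤ δ ^ 2 / R := by
      have hnn : (0:ℝ) ≤ ‖x - z‖ := norm_nonneg _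
      have hmm : ‖x - z‖ * (‖x - z‖ / R) ≤ δ ^ 2 / R := by
        rw [mul_div_assoc']
        gcongr
        nlinarith
      nlinarith [mul_le_mul_of_nonneg_left h4 hnn]
    have h8 : ⟪x - z, u⟫ = ⟪x, u⟫ - ⟪z, u⟫ := by rw [inner_sub_left]
    linarith
  refine hausdorffDist_le_of_infDist ht0 ?_ ?_
  · intro y hy
    rw [← infDist_closure]
    set C := closure (convexHull ℝ Z) with hC
    have hCconv : Convex ℝ C := (convex_convexHull ℝ Z).closure
    have hCne : C.Nonempty := hKne.closure
    have hCcomplete : IsComplete C := isClosed_closure.isComplete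
    obtain ⟨v, hvC, hv⟩ := exists_norm_eq_iInf_of_complete_convex hCne hCcomplete hCconv y
    have hvk : ∀ w ∈ C, ⟪y - v, w - v⟫ ≤ 0 :=
      (norm_eq_iInf_iff_real_inner_le_zero hCconv hvC).1 hv
    by_cases hyv : y = v
    · rw [hyv]; simpa [infDist_zero_of_mem hvC] using ht0
    have hd : 0 < ‖y - v‖ := by
      rw [norm_pos_iff]; exact sub_ne_zero_of_ne hyv
    set d := ‖y - v‖ with hdd
    set u := d⁻¹ • (y - v) with hu'
    have hu : ‖u‖ = 1 := by
      rw [hu', norm_smul, norm_inv, norm_norm, ← hdd, inv_mul_cancel₀ hd.ne']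
    obtain ⟨z, hz, hkey⟩ := key u hu
    have hzC : z ∈ C := subset_closure (subset_convexHull ℝ Z hz)
    have hzv : ⟪z - v, u⟫ ≤ 0 := by
      have h := hvk z hzC
      have heq : ⟪z - v, u⟫ = d⁻¹ * ⟪y - v, z - v⟫ := by
        rw [hu', real_inner_smul_right, real_inner_comm]
      rw [heq]
      have : (0:ℝ) ≤ d⁻¹ := inv_nonneg.2 hd.le
      nlinarith
    have hdu : ⟪y - v, u⟫ = d := by
      rw [hu', real_inner_smul_right, real_inner_self_eq_norm_sq, ← hdd]
      field_simp
    have hy1 := hkey y hy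
    have e1 : ⟪y - v, u⟫ = ⟪y, u⟫ - ⟪v, u⟫ := by rw [inner_sub_left]
    have e2 : ⟪z - v, u⟫ = ⟪z, u⟫ - ⟪v, u⟫ := by rw [inner_sub_left]
    have hdle : d ≤ δ ^ 2 / R := by linarith
    calc infDist y C ≤ dist y v := infDist_le_dist_of_mem hvC
      _ = d := by rw [dist_eq_norm]
      _ ≤ δ ^ 2 / R := hdle
  · intro y hy
    rw [infDist_zero_of_mem (hKX hy)]
    exact ht0
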